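/- Let F_q be a finite field, A ⊆ F_q a finite subset, and let P ∈ F_q[x_1,…,x_n] be a nonzero polynomial of degree d. Then Σ_{a ∈ A^n} mult(P, a) ≤ d·|A|^{n-1}. -/

import Mathlib

open MvPolynomial

/-- The β-th Hasse derivative of a multivariate polynomial `P`: the coefficient of `y^β`
in `P(x + y)`, where the outer variables are `y` and the coefficients are polynomials in `x`. -/
noncomputable def hasseDeriv {F : Type*} [CommRing F] {n : ℕ}
    (β : Fin n →₀ ℕ) (P : MvPolynomial (Fin n) F) : MvPolynomial (Fin n) F :=
  MvPolynomial.coeff β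
    (MvPolynomial.eval₂ ((MvPolynomial.C).comp (MvPolynomial.C))
      (fun i => MvPolynomial.C (MvPolynomial.X i) + MvPolynomial.X i) P)

/-- The multiplicity of `P` at a point `a`: the largest `M` such that all Hasse derivatives of
order `< M` vanish at `a` (`∞` if no largest such `M` exists). -/
noncomputable def mult {F : Type*} [CommRing F] {n : ℕ}
    (P : MvPolynomial (Fin n) F) (a : Fin n → F) : ℕ∞ :=
  sSup {M : ℕ∞ | ∀ β : Fin n →₀ ℕ, ((∑ i, β i : ℕ) : ℕ∞) < M →
    MvPolynomial.eval a (hasseDeriv β P) = 0}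

namespace SZ

open Finset

variable {F : Type*} [CommRing F] {n : ℕ}

lemma prod_X_pow (f : Fin n → ℕ) :
    (∏ i, (X i : MvPolynomial (Fin n) F) ^ f i)
      = monomial (Finsupp.equivFunOnFinite.symm f) 1 := by
  rw [monomial_eq, C_1, one_mul, Finsupp.prod_fintype]
  · simp [Finsupp.equivFunOnFinite]; rfl
  · intro i; exact pow_zero _

lemma hasseDeriv_add (β : Fin n →₀ ℕ) (P Q : MvPolynomial (Fin n) F) :
    hasseDeriv β (P + Q) = hasseDeriv β P + hasseDeriv β Q := by
  simp [hasseDeriv, eval₂_add, coeff_add]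

lemma coeff_hasseDeriv (β γ : Fin n →₀ ℕ) (P : MvPolynomial (Fin n) F) :
    coeff γ (hasseDeriv β P)
      = ((∏ i, (β i + γ i).choose (γ i) : ℕ) : F) * coeff (β + γ) P := by
  induction P using MvPolynomial.induction_on' with
  | add p q hp hq => simp [hasseDeriv_add, coeff_add, hp, hq, mul_add]
  | monomial d c =>
    rw [hasseDeriv, eval₂_monomial]
    rw [coeff_monomial]
    have hprod : (d.prod fun i e => (C (X i) + X i : MvPolynomial (Fin n) (MvPolynomial (Fin n) F)) ^ e)
        = ∏ i, (C (X i) + X i) ^ d i := Finsupp.prod_pow _ _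
    rw [hprod]
    have hexp : ∀ i : Fin n, ((C (X i) + X i : MvPolynomial (Fin n) (MvPolynomial (Fin n) F)) ^ d i)
        = ∑ k ∈ range (d i + 1),
            C (C ((d i).choose k : F)) * C ((X i : MvPolynomial (Fin n) F) ^ k)
              * (X i) ^ (d i - k) := by
      intro i
      rw [add_pow]
      refine Finset.sum_congr rfl fun k hk => ?_
      rw [← C_pow]
      have : (C (C ((d i).choose k : F)) : MvPolynomial (Fin n) (MvPolynomial (Fin n) F))
          = (((d i).choose k : ℕ) : MvPolynomial (Fin n) (MvPolynomial (Fin n) F)) := by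
        simp
      rw [this]; ring
    rw [Finset.prod_congr rfl (fun i _ => hexp i), Finset.prod_univ_sum]
    rw [RingHom.coe_comp, Function.comp_apply]
    rw [Finset.mul_sum, coeff_sum, coeff_sum]
    have hterm : ∀ p ∈ Fintype.piFinset (fun i : Fin n => range (d i + 1)),
        coeff γ (coeff β (C (C c) *
          ∏ i, C (C ((d i).choose (p i) : F)) * C ((X i : MvPolynomial (Fin n) F) ^ (p i))
            * (X i) ^ (d i - p i)))
        = (if (Finsupp.equivFunOnFinite.symm fun i => d i - p i) = β
            ∧ (Finsupp.equivFunOnFinite.symm p) = γ then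
            (∏ i, ((d i).choose (p i) : F)) * c else 0) := by
      intro p _
      rw [Finset.prod_mul_distrib, Finset.prod_mul_distrib, ← map_prod, ← map_prod, ← map_prod,
        prod_X_pow, prod_X_pow]
      rw [show (C (C c) * (C (C (∏ i, ((d i).choose (p i) : F)))
            * C (monomial (Finsupp.equivFunOnFinite.symm p) (1 : F))
            * monomial (Finsupp.equivFunOnFinite.symm fun i => d i - p i) 1))
          = C ((C (c * ∏ i, ((d i).choose (p i) : F)))
              * monomial (Finsupp.equivFunOnFinite.symm p) (1 : F))
            * monomial (Finsupp.equivFunOnFinite.symm fun i => d i - p i) 1 by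
        simp only [map_mul]; ring]
      rw [coeff_C_mul, coeff_monomial]
      by_cases h1 : (Finsupp.equivFunOnFinite.symm fun i => d i - p i) = β
      · rw [if_pos h1, mul_one, coeff_C_mul, coeff_monomial]
        by_cases h2 : (Finsupp.equivFunOnFinite.symm p) = γ
        · rw [if_pos h2, if_pos ⟨h1, h2⟩, mul_one, mul_comm]
        · rw [if_neg h2, if_neg (by tauto), mul_zero]
      · rw [if_neg h1, mul_zero, coeff_zero, if_neg (by tauto)]
    rw [Finset.sum_congr rfl hterm]
    by_cases hd : d = β + γ
    · subst hd
      rw [if_pos rfl]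
      rw [Finset.sum_eq_single_of_mem (fun i => γ i)
        (by rw [Fintype.mem_piFinset]; intro i
            rw [Finset.mem_range, Finsupp.add_apply]; omega)
        (by intro p hp hne
            rw [if_neg]
            rintro ⟨h1, h2⟩
            apply hne
            funext i
            have := congrArg (fun f => f i) (congrArg (⇑Finsupp.equivFunOnFinite) h2)
            simpa using this)]
      have e1 : (Finsupp.equivFunOnFinite.symm fun i => (β + γ) i - γ i) = β := by
        ext i; simp [Finsupp.add_apply]
      have e2 : (Finsupp.equivFunOnFinite.symm fun i : Fin n => γ i) = γ := by
        ext i; simp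
      rw [if_pos ⟨e1, e2⟩, Nat.cast_prod]
      exact congrArg (· * c) (Finset.prod_congr rfl fun i _ => by rw [Finsupp.add_apply])

    · rw [if_neg hd, mul_zero]
      refine Finset.sum_eq_zero fun p hp => ?_
      rw [if_neg]
      rintro ⟨h1, h2⟩
      apply hd
      rw [Fintype.mem_piFinset] at hp
      ext i
      have hp1 : p i ≤ d i := by
        have := hp i; rw [Finset.mem_range] at this; omega
      have hb : d i - p i = β i := by
        have := congrArg (fun f => f i) (congrArg (⇑Finsupp.equivFunOnFinite) h1)
        simpa using this
      have hg : p i = γ i := by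
        have := congrArg (fun f => f i) (congrArg (⇑Finsupp.equivFunOnFinite) h2)
        simpa using this
      rw [Finsupp.add_apply]
      omega

noncomputable def Phih : MvPolynomial (Fin n) F →+* MvPolynomial (Fin n) (MvPolynomial (Fin n) F) :=
  eval₂Hom ((C : MvPolynomial (Fin n) F →+* _).comp C) (fun i => C (X i) + X i)

lemma hasseDeriv_eq (β : Fin n →₀ ℕ) (P : MvPolynomial (Fin n) F) :
    hasseDeriv β P = coeff β (Phih P) := rfl

noncomputable def shiftH (a : Fin n → F) : MvPolynomial (Fin n) F →+* MvPolynomial (Fin n) F :=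
  eval₂Hom C (fun i => C (a i) + X i)

lemma map_eval_comp (a : Fin n → F) :
    (MvPolynomial.map (eval a : MvPolynomial (Fin n) F →+* F)).comp Phih = shiftH a := by
  apply ringHom_ext <;> simp [Phih, shiftH]

lemma eval_hasseDeriv (a : Fin n → F) (β : Fin n →₀ ℕ) (P : MvPolynomial (Fin n) F) :
    eval a (hasseDeriv β P) = coeff β (shiftH a P) := by
  rw [hasseDeriv_eq, ← coeff_map, ← map_eval_comp a]
  rfl

lemma map_shift_comp (a : Fin n → F) :
    (MvPolynomial.map (shiftH a)).comp Phih = (Phih).comp (shiftH a) := by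
  apply ringHom_ext
  · intro r; simp [Phih, shiftH]
  · intro i; simp [Phih, shiftH, map_add]; ring

lemma shift_hasseDeriv (a : Fin n → F) (β : Fin n →₀ ℕ) (P : MvPolynomial (Fin n) F) :
    shiftH a (hasseDeriv β P) = hasseDeriv β (shiftH a P) := by
  rw [hasseDeriv_eq, ← coeff_map, hasseDeriv_eq]
  congr 1
  change ((MvPolynomial.map (shiftH a)).comp Phih) P = _
  rw [map_shift_comp]
  rfl

lemma shift_shift (a : Fin n → F) (P : MvPolynomial (Fin n) F) :
    shiftH (-a) (shiftH a P) = P := by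
  change ((shiftH (-a)).comp (shiftH a)) P = RingHom.id _ P
  congr 1
  apply ringHom_ext
  · intro r; simp [shiftH]
  · intro i; simp [shiftH]

lemma shift_ne_zero {a : Fin n → F} {P : MvPolynomial (Fin n) F} (h : P ≠ 0) :
    shiftH a P ≠ 0 := by
  intro h0
  apply h
  rw [← shift_shift a P, h0, map_zero]

lemma mult_eq (P : MvPolynomial (Fin n) F) (a : Fin n → F) :
    mult P a = sSup {M : ℕ∞ | ∀ β : Fin n →₀ ℕ, ((∑ i, β i : ℕ) : ℕ∞) < M →
      coeff β (shiftH a P) = 0} := by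
  unfold mult
  congr 1
  ext M
  simp only [Set.mem_setOf_eq, eval_hasseDeriv]

lemma mult_vanish {P : MvPolynomial (Fin n) F} {a : Fin n → F} {β : Fin n →₀ ℕ}
    (h : ((∑ i, β i : ℕ) : ℕ∞) < mult P a) : coeff β (shiftH a P) = 0 := by
  rw [mult_eq] at h
  obtain ⟨M, hM, hβM⟩ := lt_sSup_iff.mp h
  exact hM β hβM

lemma le_mult {P : MvPolynomial (Fin n) F} {a : Fin n → F} {M : ℕ∞}
    (h : ∀ β : Fin n →₀ ℕ, ((∑ i, β i : ℕ) : ℕ∞) < M → coeff β (shiftH a P) = 0) :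
    M ≤ mult P a := by
  rw [mult_eq]; exact le_sSup h

lemma mult_le {P : MvPolynomial (Fin n) F} {a : Fin n → F} {β : Fin n →₀ ℕ}
    (h : coeff β (shiftH a P) ≠ 0) : mult P a ≤ ((∑ i, β i : ℕ) : ℕ∞) := by
  by_contra hlt
  push_neg at hlt
  exact h (mult_vanish hlt)

lemma mult_ne_top {P : MvPolynomial (Fin n) F} {a : Fin n → F} (h : P ≠ 0) :
    mult P a ≠ ⊤ := by
  obtain ⟨β, hβ⟩ := MvPolynomial.ne_zero_iff.mp (shift_ne_zero (a := a) h)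
  intro htop
  have := mult_le hβ
  rw [htop] at this
  exact (ENat.coe_lt_top _).not_ge this

lemma exists_coeff_mult {P : MvPolynomial (Fin n) F} {a : Fin n → F} {m : ℕ}
    (hm : mult P a = (m : ℕ∞)) :
    ∃ β : Fin n →₀ ℕ, (∑ i, β i) = m ∧ coeff β (shiftH a P) ≠ 0 := by
  by_contra hc
  push_neg at hc
  have hle : ((m + 1 : ℕ) : ℕ∞) ≤ mult P a := by
    apply le_mult
    intro β hβ
    rw [Nat.cast_lt] at hβ
    rcases Nat.lt_succ_iff_lt_or_eq.mp hβ with hlt | heq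
    · exact mult_vanish (by rw [hm]; exact_mod_cast hlt)
    · exact hc β heq
  rw [hm, Nat.cast_le] at hle
  omega

lemma hasseDeriv_zero_poly (β : Fin n →₀ ℕ) : hasseDeriv β (0 : MvPolynomial (Fin n) F) = 0 := by
  rw [hasseDeriv_eq, map_zero, coeff_zero]

lemma sum_cons (k : ℕ) (β : Fin n →₀ ℕ) :
    ∑ i, (Finsupp.cons k β) i = k + ∑ i, β i := by
  simp [Fin.sum_univ_succ, Finsupp.cons_succ]

lemma cons_add_cons (j : ℕ) (β m : Fin n →₀ ℕ) :
    Finsupp.cons 0 β + Finsupp.cons j m = Finsupp.cons j (β + m) := by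
  ext i
  rcases Fin.eq_zero_or_eq_succ i with rfl | ⟨i', rfl⟩
  · simp [Finsupp.cons_zero]
  · simp [Finsupp.cons_succ]

lemma mult_le_add_mult_hasseDeriv (β : Fin n →₀ ℕ) (P : MvPolynomial (Fin n) F)
    (x : Fin n → F) :
    mult P x ≤ ((∑ i, β i : ℕ) : ℕ∞) + mult (hasseDeriv β P) x := by
  have h1 : mult P x - ((∑ i, β i : ℕ) : ℕ∞) ≤ mult (hasseDeriv β P) x := by
    apply le_mult
    intro γ hγ
    rw [shift_hasseDeriv, coeff_hasseDeriv]
    have hv : coeff (β + γ) (shiftH x P) = 0 := by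
      apply mult_vanish
      have hsum : (∑ i, (β + γ) i) = (∑ i, β i) + (∑ i, γ i) := by
        simp [Finsupp.add_apply, Finset.sum_add_distrib]
      rw [hsum]
      cases hM : mult P x with
      | top => exact ENat.coe_lt_top _
      | coe M =>
        rw [hM] at hγ
        rw [← ENat.coe_sub, Nat.cast_lt] at hγ
        rw [Nat.cast_lt]
        omega
    rw [hv, mul_zero]
  calc mult P x ≤ ((∑ i, β i : ℕ) : ℕ∞) + (mult P x - ((∑ i, β i : ℕ) : ℕ∞)) := le_add_tsub
    _ ≤ _ := add_le_add_right h1 _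

lemma finSuccEquiv_hasseDeriv (β : Fin n →₀ ℕ) (P : MvPolynomial (Fin (n + 1)) F) (j : ℕ) :
    (finSuccEquiv F n (hasseDeriv (Finsupp.cons 0 β) P)).coeff j
      = hasseDeriv β ((finSuccEquiv F n P).coeff j) := by
  apply MvPolynomial.ext
  intro m
  rw [finSuccEquiv_coeff_coeff, coeff_hasseDeriv, coeff_hasseDeriv, finSuccEquiv_coeff_coeff,
    cons_add_cons]
  congr 1
  rw [Fin.prod_univ_succ]
  simp only [Finsupp.cons_zero, Finsupp.cons_succ]
  rw [zero_add, Nat.choose_self, one_mul]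

section FieldPart

variable {K : Type*} [Field K] {n : ℕ}

noncomputable def psiA (a : Fin n → K) : MvPolynomial (Fin (n + 1)) K →+* Polynomial K :=
  eval₂Hom Polynomial.C (Fin.cases Polynomial.X (fun j => Polynomial.C (a j)))

noncomputable def psiAB (b : K) (a : Fin n → K) :
    MvPolynomial (Fin (n + 1)) K →+* Polynomial K :=
  eval₂Hom Polynomial.C (Fin.cases (Polynomial.X + Polynomial.C b) (fun j => Polynomial.C (a j)))

lemma coeff_psiA (a : Fin n → K) (Q : MvPolynomial (Fin (n + 1)) K) (j : ℕ) :
    (psiA a Q).coeff j = eval a ((finSuccEquiv K n Q).coeff j) := by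
  have h : psiA a = (Polynomial.mapRingHom (eval a : MvPolynomial (Fin n) K →+* K)).comp
      ((finSuccEquiv K n : MvPolynomial (Fin (n+1)) K ≃ₐ[K] _) :
        MvPolynomial (Fin (n+1)) K →+* Polynomial (MvPolynomial (Fin n) K)) := by
    apply ringHom_ext
    · intro r; simp [psiA, finSuccEquiv_apply]
    · intro i
      induction i using Fin.cases
      · simp [psiA, finSuccEquiv_X_zero]
      · simp [psiA, finSuccEquiv_X_succ]
  rw [h]
  simp [Polynomial.coeff_map]

lemma psiAB_eq (b : K) (a : Fin n → K) (Q : MvPolynomial (Fin (n + 1)) K) :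
    psiAB b a Q = (psiA a Q).comp (Polynomial.X + Polynomial.C b) := by
  have h : psiAB b a = (Polynomial.eval₂RingHom (Polynomial.C : K →+* Polynomial K)
      (Polynomial.X + Polynomial.C b)).comp (psiA a) := by
    apply ringHom_ext
    · intro r; simp [psiA, psiAB]
    · intro i
      induction i using Fin.cases
      · simp [psiA, psiAB]
      · simp [psiA, psiAB]
  rw [h]
  rfl

lemma psiAB_eq_shift (b : K) (a : Fin n → K) :
    psiAB b a = (psiA (0 : Fin n → K)).comp (shiftH (Fin.cons b a)) := by
  apply ringHom_ext
  · intro r; simp [psiA, psiAB, shiftH]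
  · intro i
    induction i using Fin.cases
    · simp [psiA, psiAB, shiftH, Fin.cons_zero, add_comm]
    · simp [psiA, psiAB, shiftH, Fin.cons_succ]

lemma coeff_psiA_zero (Q : MvPolynomial (Fin (n + 1)) K) (k : ℕ) :
    (psiA (0 : Fin n → K) Q).coeff k = coeff (Finsupp.cons k (0 : Fin n →₀ ℕ)) Q := by
  rw [coeff_psiA, ← finSuccEquiv_coeff_coeff]
  have : (0 : Fin n → K) = fun _ => (0:K) := rfl
  rw [show (eval (0 : Fin n → K) ((finSuccEquiv K n Q).coeff k))
      = constantCoeff ((finSuccEquiv K n Q).coeff k) from ?_]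
  · rfl
  · rw [eval_zero]

lemma coeff_psiAB (b : K) (a : Fin n → K) (Q : MvPolynomial (Fin (n + 1)) K) (k : ℕ) :
    (psiAB b a Q).coeff k = coeff (Finsupp.cons k (0 : Fin n →₀ ℕ))
      (shiftH (Fin.cons b a) Q) := by
  rw [psiAB_eq_shift, RingHom.comp_apply, coeff_psiA_zero]

lemma mult_le_rootMultiplicity {R : MvPolynomial (Fin (n + 1)) K} {b : K} {a : Fin n → K}
    (hr : psiA a R ≠ 0) :
    mult R (Fin.cons b a) ≤ (Polynomial.rootMultiplicity b (psiA a R) : ℕ∞) := by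
  have hdvd : ∀ k : ℕ, (k : ℕ∞) ≤ mult R (Fin.cons b a) →
      (Polynomial.X - Polynomial.C b) ^ k ∣ psiA a R := by
    intro k hk
    have hX : Polynomial.X ^ k ∣ psiAB b a R := by
      rw [Polynomial.X_pow_dvd_iff]
      intro e he
      rw [coeff_psiAB]
      apply mult_vanish
      have hs : (∑ i, (Finsupp.cons e (0 : Fin n →₀ ℕ)) i) = e := by
        rw [sum_cons]; simp
      rw [hs]
      exact lt_of_lt_of_le (by exact_mod_cast he) hk
    obtain ⟨u, hu⟩ := hX
    have hre : psiA a R = (psiAB b a R).comp (Polynomial.X - Polynomial.C b) := by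
      rw [psiAB_eq, Polynomial.comp_assoc, Polynomial.add_comp, Polynomial.X_comp,
        Polynomial.C_comp, sub_add_cancel, Polynomial.comp_X]
    rw [hre, hu, Polynomial.mul_comp, Polynomial.pow_comp, Polynomial.X_comp]
    exact dvd_mul_right _ _
  cases hM : mult R (Fin.cons b a) with
  | top =>
    exfalso
    have h1 := hdvd ((psiA a R).natDegree + 1) (by rw [hM]; exact le_top)
    have hdeg := Polynomial.natDegree_le_of_dvd h1 hr
    rw [Polynomial.natDegree_pow, Polynomial.natDegree_X_sub_C, mul_one] at hdeg
    omega
  | coe M =>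
    have h1 := hdvd M (by rw [hM])
    rw [Nat.cast_le]
    exact (Polynomial.le_rootMultiplicity_iff hr).mpr h1

lemma sum_rootMultiplicity_le (A : Finset K) {r : Polynomial K} (hr : r ≠ 0) :
    ∑ b ∈ A, Polynomial.rootMultiplicity b r ≤ r.natDegree := by
  classical
  have h1 : ∑ b ∈ A, Polynomial.rootMultiplicity b r = ∑ b ∈ A, r.roots.count b :=
    Finset.sum_congr rfl fun b _ => (Polynomial.count_roots r).symm
  rw [h1]
  have h2 : ∑ b ∈ A, r.roots.count b = ∑ b ∈ A ∩ r.roots.toFinset, r.roots.count b := by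
    refine (Finset.sum_subset Finset.inter_subset_left fun b hb hnb => ?_).symm
    rw [Multiset.count_eq_zero]
    intro hmem
    exact hnb (Finset.mem_inter.mpr ⟨hb, Multiset.mem_toFinset.mpr hmem⟩)
  rw [h2]
  calc ∑ b ∈ A ∩ r.roots.toFinset, r.roots.count b
      ≤ ∑ b ∈ r.roots.toFinset, r.roots.count b :=
        Finset.sum_le_sum_of_subset Finset.inter_subset_right
    _ = Multiset.card r.roots := Multiset.toFinset_sum_count_eq _
    _ ≤ r.natDegree := by
        have := Polynomial.card_roots' r
        omega

lemma line_bound (A : Finset K) (P : MvPolynomial (Fin (n + 1)) K)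
    (hP0 : finSuccEquiv K n P ≠ 0) (a : Fin n → K) (m : ℕ)
    (hm : mult ((finSuccEquiv K n P).coeff (finSuccEquiv K n P).natDegree) a = (m : ℕ∞)) :
    ∑ b ∈ A, mult P (Fin.cons b a)
      ≤ (A.card : ℕ∞) * (m : ℕ∞) + ((finSuccEquiv K n P).natDegree : ℕ∞) := by
  obtain ⟨β, hβsum, hβ⟩ := exists_coeff_mult hm
  set t := (finSuccEquiv K n P).natDegree with ht
  set R := hasseDeriv (Finsupp.cons 0 β) P with hR
  have hcoeffj : ∀ j, (psiA a R).coeff j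
      = eval a (hasseDeriv β ((finSuccEquiv K n P).coeff j)) := by
    intro j
    rw [coeff_psiA, hR, finSuccEquiv_hasseDeriv]
  have hrt : (psiA a R).coeff t ≠ 0 := by
    rw [hcoeffj, eval_hasseDeriv]
    exact hβ
  have hrne : psiA a R ≠ 0 := fun h => hrt (by rw [h, Polynomial.coeff_zero])
  have hdeg : (psiA a R).natDegree ≤ t := by
    rw [Polynomial.natDegree_le_iff_coeff_eq_zero]
    intro j hj
    rw [hcoeffj, Polynomial.coeff_eq_zero_of_natDegree_lt hj, hasseDeriv_zero_poly, map_zero]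
  have hmm : ∀ b : K, mult P (Fin.cons b a) ≤ (m : ℕ∞) + mult R (Fin.cons b a) := by
    intro b
    have := mult_le_add_mult_hasseDeriv (Finsupp.cons 0 β) P (Fin.cons b a)
    rwa [sum_cons, zero_add, hβsum] at this
  calc ∑ b ∈ A, mult P (Fin.cons b a)
      ≤ ∑ b ∈ A, ((m : ℕ∞) + (Polynomial.rootMultiplicity b (psiA a R) : ℕ∞)) :=
        Finset.sum_le_sum fun b _ => le_trans (hmm b)
          (add_le_add_right (mult_le_rootMultiplicity hrne) _)
    _ = A.card • (m : ℕ∞) + ∑ b ∈ A, (Polynomial.rootMultiplicity b (psiA a R) : ℕ∞) := by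
        rw [Finset.sum_add_distrib, Finset.sum_const]
    _ ≤ (A.card : ℕ∞) * (m : ℕ∞) + (t : ℕ∞) := by
        rw [nsmul_eq_mul]
        refine add_le_add_right ?_ _
        rw [← Nat.cast_sum, Nat.cast_le]
        exact le_trans (sum_rootMultiplicity_le A hrne) hdeg

lemma totalDegree_fin_zero (P : MvPolynomial (Fin 0) K) : P.totalDegree = 0 := by
  apply Nat.eq_zero_of_le_zero
  apply Finset.sup_le
  intro s _
  have hs : s = 0 := Finsupp.ext fun i => isEmptyElim i
  subst hs
  simp

lemma sum_piFinset_succ {M : Type*} [AddCommMonoid M] (A : Finset K)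
    (g : (Fin (n + 1) → K) → M) :
    ∑ x ∈ Fintype.piFinset (fun _ : Fin (n + 1) => A), g x
      = ∑ a ∈ Fintype.piFinset (fun _ : Fin n => A), ∑ b ∈ A, g (Fin.cons b a) := by
  refine Eq.trans ?_ (Finset.sum_product (s := Fintype.piFinset fun _ : Fin n => A)
    (t := A) (f := fun q => g (Fin.cons q.2 q.1)))
  refine Finset.sum_nbij' (i := fun x => (Fin.tail x, x 0)) (j := fun q => Fin.cons q.2 q.1)
    ?_ ?_ ?_ ?_ ?_
  · intro x hx
    rw [Fintype.mem_piFinset] at hx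
    rw [Finset.mem_product]
    exact ⟨Fintype.mem_piFinset.mpr fun i => hx i.succ, hx 0⟩
  · intro q hq
    rw [Finset.mem_product] at hq
    rw [Fintype.mem_piFinset]
    intro i
    rcases Fin.eq_zero_or_eq_succ i with rfl | ⟨i', rfl⟩
    · simpa using hq.2
    · simpa using Fintype.mem_piFinset.mp hq.1 i'
  · intro x _
    exact Fin.cons_self_tail x
  · intro q _
    simp [Fin.tail_cons, Fin.cons_zero]
  · intro x _
    rw [Fin.cons_self_tail]

lemma nat_arith (c dT t d n : ℕ) (hc : 1 ≤ c) (h : dT + t ≤ d) (hdT0 : n = 0 → dT = 0) :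
    c * (dT * c ^ (n - 1)) + c ^ n * t ≤ d * c ^ n := by
  cases n with
  | zero =>
    have : dT = 0 := hdT0 rfl
    subst this
    simpa using h
  | succ k =>
    have h1 : k + 1 - 1 = k := rfl
    rw [h1]
    have h2 : c * (dT * c ^ k) + c ^ (k + 1) * t = (dT + t) * c ^ (k + 1) := by ring
    rw [h2]
    exact Nat.mul_le_mul_right _ h

lemma main_induction : ∀ (n : ℕ) (A : Finset K) (P : MvPolynomial (Fin n) K), P ≠ 0 →
    ∑ a ∈ Fintype.piFinset (fun _ : Fin n => A), mult P a
      ≤ ((P.totalDegree * A.card ^ (n - 1) : ℕ) : ℕ∞) := by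
  intro n
  induction n with
  | zero =>
    intro A P hP
    have hterm : ∀ a ∈ Fintype.piFinset (fun _ : Fin 0 => A), mult P a = 0 := by
      intro a _
      obtain ⟨β, hβ⟩ := MvPolynomial.ne_zero_iff.mp (shift_ne_zero (a := a) hP)
      have h := mult_le hβ
      have hβ0 : (∑ i, β i) = 0 := by simp
      rw [hβ0] at h
      exact le_antisymm (by exact_mod_cast h) zero_le
    rw [Finset.sum_congr rfl hterm, Finset.sum_const, smul_zero]
    exact zero_le
  | succ n ih =>
    intro A P hP
    by_cases hA : A = ∅
    · subst hA
      have hempty : Fintype.piFinset (fun _ : Fin (n + 1) => (∅ : Finset K)) = ∅ := by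
        ext x
        constructor
        · intro h
          exact absurd (Fintype.mem_piFinset.mp h 0) (Finset.notMem_empty _)
        · intro h
          exact absurd h (Finset.notMem_empty _)
      rw [hempty, Finset.sum_empty]
      exact zero_le
    · have hcard : 1 ≤ A.card := Finset.card_pos.mpr (Finset.nonempty_iff_ne_empty.mpr hA)
      have hp0 : finSuccEquiv K n P ≠ 0 := by
        intro h0
        apply hP
        have := congrArg (finSuccEquiv K n).symm h0
        simpa using this
      set t := (finSuccEquiv K n P).natDegree with hT
      set Pt := (finSuccEquiv K n P).coeff t with hPt
      have hPtne : Pt ≠ 0 := by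
        rw [hPt, hT]
        exact Polynomial.leadingCoeff_ne_zero.mpr hp0
      have hdt : Pt.totalDegree + t ≤ P.totalDegree :=
        totalDegree_coeff_finSuccEquiv_add_le P t hPtne
      have hmne : ∀ a : Fin n → K, mult Pt a ≠ ⊤ := fun a => mult_ne_top hPtne
      rw [sum_piFinset_succ]
      have hline : ∀ a ∈ Fintype.piFinset (fun _ : Fin n => A),
          ∑ b ∈ A, mult P (Fin.cons b a) ≤ (A.card : ℕ∞) * mult Pt a + (t : ℕ∞) := by
        intro a _
        have hm : mult Pt a = ((mult Pt a).toNat : ℕ∞) := (ENat.coe_toNat (hmne a)).symm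
        have := line_bound A P hp0 a (mult Pt a).toNat hm
        rw [hm]
        exact this
      calc ∑ a ∈ Fintype.piFinset (fun _ : Fin n => A), ∑ b ∈ A, mult P (Fin.cons b a)
          ≤ ∑ a ∈ Fintype.piFinset (fun _ : Fin n => A),
              ((A.card : ℕ∞) * mult Pt a + (t : ℕ∞)) := Finset.sum_le_sum hline
        _ = (A.card : ℕ∞) * (∑ a ∈ Fintype.piFinset (fun _ : Fin n => A), mult Pt a)
              + ((Fintype.piFinset (fun _ : Fin n => A)).card : ℕ∞) * (t : ℕ∞) := by
            rw [Finset.sum_add_distrib, Finset.sum_const, ← Finset.mul_sum, nsmul_eq_mul]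
        _ ≤ (A.card : ℕ∞) * ((Pt.totalDegree * A.card ^ (n - 1) : ℕ) : ℕ∞)
              + ((A.card ^ n : ℕ) : ℕ∞) * (t : ℕ∞) := by
            have hc : (Fintype.piFinset (fun _ : Fin n => A)).card = A.card ^ n := by
              rw [Fintype.card_piFinset]
              simp
            rw [hc]
            exact add_le_add_left (mul_le_mul_right (ih A Pt hPtne) _) _
        _ ≤ ((P.totalDegree * A.card ^ n : ℕ) : ℕ∞) := by
            rw [← Nat.cast_mul, ← Nat.cast_mul, ← Nat.cast_add, Nat.cast_le]
            exact nat_arith A.card Pt.totalDegree t P.totalDegree n hcard hdt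
              (fun hn => by subst hn; exact totalDegree_fin_zero Pt)
        _ ≤ ((P.totalDegree * A.card ^ (n + 1 - 1) : ℕ) : ℕ∞) := le_refl _

end FieldPart

end SZ

/-- Lemma 2.5 (strengthened Schwartz–Zippel): for `A ⊆ F_q` and a nonzero polynomial `P` of
degree `d`, `Σ_{a ∈ A^n} mult(P, a) ≤ d · |A|^{n-1}`. -/
theorem schwartz_zippel_with_multiplicities {F : Type*} [Field F] [Fintype F] {n : ℕ}
    (A : Finset F) (P : MvPolynomial (Fin n) F) (hP : P ≠ 0) (d : ℕ)
    (hd : P.totalDegree = d) :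
    ∑ a ∈ Fintype.piFinset (fun _ : Fin n => A), mult P a
      ≤ ((d * A.card ^ (n - 1) : ℕ) : ℕ∞) := by
  subst hd
  exact SZ.main_induction n A P hP
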